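/- arXiv:2406.01769 — 9 statements merged into one kernel-verified Lean document; each statement's English description precedes it below -/
import Mathlib

section
/- For any integrable function f on [0, π/T] with 0 ≤ f(ω) ≤ α_M and ∫₀^{π/T} f(ω) dω = α_M·Γ where 0 ≤ Γ ≤ π/(2T), one has ∫₀^{π/T} f(ω)·cos(ωT) dω ≤ ∫₀^Γ α_M·cos(ωT) dω. -/
open Real MeasureTheory intervalIntegral

theorem square_tooth_optimal_high_finesse
    (T αM Γ : ℝ) (hT : 0 < T) (hα : 0 < αM)
    (hΓ0 : 0 ≤ Γ) (hΓ : Γ ≤ π / (2 * T))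
    (f : ℝ → ℝ)
    (hint : IntervalIntegrable f volume 0 (π / T))
    (hbound : ∀ ω ∈ Set.Icc 0 (π / T), 0 ≤ f ω ∧ f ω ≤ αM)
    (harea : ∫ ω in (0:ℝ)..(π / T), f ω = αM * Γ) :
    (∫ ω in (0:ℝ)..(π / T), f ω * Real.cos (ω * T)) ≤
      ∫ ω in (0:ℝ)..Γ, αM * Real.cos (ω * T) := by
  have hπ : 0 < π := Real.pi_pos
  have hπT : 0 < π / T := by positivity
  have hΓT : Γ ≤ π / T := by
    refine le_trans hΓ ?_
    rw [div_le_div_iff₀ (by positivity) hT]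
    nlinarith
  set c := Real.cos (Γ * T) with hc
  have hcont : ∀ a b : ℝ, ContinuousOn (fun ω => Real.cos (ω * T) - c) (Set.uIcc a b) :=
    fun a b => ((Real.continuous_cos.comp (continuous_id.mul continuous_const)).sub
      continuous_const).continuousOn
  have hint1 : IntervalIntegrable (fun ω => f ω * (Real.cos (ω * T) - c)) volume 0 (π / T) :=
    hint.mul_continuousOn (hcont _ _)
  have hsub1 : Set.uIcc (0:ℝ) Γ ⊆ Set.uIcc (0:ℝ) (π / T) :=
    Set.uIcc_subset_uIcc (Set.left_mem_uIcc)
      (by rw [Set.uIcc_of_le hπT.le]; exact ⟨hΓ0, hΓT⟩)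
  have hsub2 : Set.uIcc Γ (π / T) ⊆ Set.uIcc (0:ℝ) (π / T) :=
    Set.uIcc_subset_uIcc (by rw [Set.uIcc_of_le hπT.le]; exact ⟨hΓ0, hΓT⟩)
      Set.right_mem_uIcc
  have hA : IntervalIntegrable (fun ω => f ω * (Real.cos (ω * T) - c)) volume 0 Γ :=
    hint1.mono_set hsub1
  have hB : IntervalIntegrable (fun ω => f ω * (Real.cos (ω * T) - c)) volume Γ (π / T) :=
    hint1.mono_set hsub2
  have hA' : IntervalIntegrable (fun ω => αM * (Real.cos (ω * T) - c)) volume 0 Γ :=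
    (continuous_const.mul ((Real.continuous_cos.comp
      (continuous_id.mul continuous_const)).sub continuous_const)).intervalIntegrable _ _
  -- pointwise bounds
  have hb1 : ∀ ω ∈ Set.Icc (0:ℝ) Γ, f ω * (Real.cos (ω * T) - c) ≤ αM * (Real.cos (ω * T) - c) := by
    intro ω hω
    have hωmem : ω ∈ Set.Icc (0:ℝ) (π / T) := ⟨hω.1, le_trans hω.2 hΓT⟩
    have hcos : c ≤ Real.cos (ω * T) := by
      apply Real.cos_le_cos_of_nonneg_of_le_pi (mul_nonneg hω.1 hT.le)
      · have h2T : Γ * (2 * T) ≤ π := by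
          rw [← le_div_iff₀ (by positivity)]; exact hΓ
        nlinarith
      · nlinarith [hω.2]
    nlinarith [(hbound ω hωmem).2, (hbound ω hωmem).1]
  have hb2 : ∀ ω ∈ Set.Icc Γ (π / T), f ω * (Real.cos (ω * T) - c) ≤ 0 := by
    intro ω hω
    have hωmem : ω ∈ Set.Icc (0:ℝ) (π / T) := ⟨le_trans hΓ0 hω.1, hω.2⟩
    have hcos : Real.cos (ω * T) ≤ c := by
      apply Real.cos_le_cos_of_nonneg_of_le_pi (by positivity)
      · calc ω * T ≤ (π / T) * T := by nlinarith [hω.2]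
          _ = π := div_mul_cancel₀ π hT.ne'
      · nlinarith [hω.1]
    nlinarith [(hbound ω hωmem).1]
  have key : (∫ ω in (0:ℝ)..(π / T), f ω * (Real.cos (ω * T) - c)) ≤
      ∫ ω in (0:ℝ)..Γ, αM * (Real.cos (ω * T) - c) := by
    rw [← intervalIntegral.integral_add_adjacent_intervals hA hB]
    have h1 : (∫ ω in (0:ℝ)..Γ, f ω * (Real.cos (ω * T) - c)) ≤
        ∫ ω in (0:ℝ)..Γ, αM * (Real.cos (ω * T) - c) :=
      intervalIntegral.integral_mono_on hΓ0 hA hA' hb1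
    have h2 : (∫ ω in Γ..(π / T), f ω * (Real.cos (ω * T) - c)) ≤ 0 := by
      have := intervalIntegral.integral_mono_on hΓT hB
        (intervalIntegrable_const : IntervalIntegrable (fun _ : ℝ => (0:ℝ)) volume Γ (π / T)) hb2
      simpa using this
    linarith
  have e1 : (∫ ω in (0:ℝ)..(π / T), f ω * Real.cos (ω * T)) =
      (∫ ω in (0:ℝ)..(π / T), f ω * (Real.cos (ω * T) - c)) + c * (αM * Γ) := by
    rw [← harea, ← intervalIntegral.integral_const_mul,
      ← intervalIntegral.integral_add hint1 (hint.const_mul c)]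
    congr 1
    funext ω
    ring
  have e2 : (∫ ω in (0:ℝ)..Γ, αM * Real.cos (ω * T)) =
      (∫ ω in (0:ℝ)..Γ, αM * (Real.cos (ω * T) - c)) + c * (αM * Γ) := by
    have hC : IntervalIntegrable (fun _ : ℝ => c * αM) volume 0 Γ :=
      intervalIntegrable_const
    have := intervalIntegral.integral_add hA' hC
    have hconst : (∫ _ω in (0:ℝ)..Γ, c * αM) = c * αM * Γ := by
      simp [intervalIntegral.integral_const, smul_eq_mul]
      ring
    calc (∫ ω in (0:ℝ)..Γ, αM * Real.cos (ω * T))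
        = ∫ ω in (0:ℝ)..Γ, (αM * (Real.cos (ω * T) - c) + c * αM) := by
          congr 1; funext ω; ring
      _ = (∫ ω in (0:ℝ)..Γ, αM * (Real.cos (ω * T) - c)) + ∫ _ω in (0:ℝ)..Γ, c * αM := this
      _ = (∫ ω in (0:ℝ)..Γ, αM * (Real.cos (ω * T) - c)) + c * (αM * Γ) := by
          rw [hconst]; ring
  rw [e1, e2]
  linarith
end

section
/- For any integrable function f on [0, π/T] with 0 ≤ f(ω) ≤ α_M and ∫₀^{π/T} f(ω) dω = α_M·Γ where π/(2T) < Γ ≤ π/T, one has ∫₀^{π/T} f(ω)·cos(ωT) dω ≤ ∫₀^Γ α_M·cos(ωT) dω. -/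
open Real MeasureTheory intervalIntegral

theorem square_tooth_optimal_low_finesse
    (T αM Γ : ℝ) (hT : 0 < T) (hα : 0 < αM)
    (hΓ0 : π / (2 * T) < Γ) (hΓ : Γ ≤ π / T)
    (f : ℝ → ℝ)
    (hint : IntervalIntegrable f volume 0 (π / T))
    (hbound : ∀ ω ∈ Set.Icc 0 (π / T), 0 ≤ f ω ∧ f ω ≤ αM)
    (harea : ∫ ω in (0:ℝ)..(π / T), f ω = αM * Γ) :
    (∫ ω in (0:ℝ)..(π / T), f ω * Real.cos (ω * T)) ≤
      ∫ ω in (0:ℝ)..Γ, αM * Real.cos (ω * T) := by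
  have hΓpos : 0 < Γ := lt_trans (by positivity) hΓ0
  have hπT : 0 < π / T := lt_of_lt_of_le hΓpos hΓ
  have hΓT : Γ * T ≤ π := by
    rw [← le_div_iff₀ hT]; exact hΓ
  set c := Real.cos (Γ * T) with hc
  have hcont : Continuous fun ω : ℝ => Real.cos (ω * T) - c := by continuity
  have hIfc : IntervalIntegrable (fun ω => f ω * (Real.cos (ω * T) - c)) volume 0 (π / T) :=
    hint.mul_continuousOn hcont.continuousOn
  have hsub1 : Set.uIcc (0:ℝ) Γ ⊆ Set.uIcc (0:ℝ) (π / T) := by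
    rw [Set.uIcc_of_le hΓpos.le, Set.uIcc_of_le hπT.le]
    exact Set.Icc_subset_Icc_right hΓ
  have hsub2 : Set.uIcc Γ (π / T) ⊆ Set.uIcc (0:ℝ) (π / T) := by
    rw [Set.uIcc_of_le hΓ, Set.uIcc_of_le hπT.le]
    exact Set.Icc_subset_Icc_left hΓpos.le
  have hA : IntervalIntegrable (fun ω => f ω * (Real.cos (ω * T) - c)) volume 0 Γ :=
    hIfc.mono_set hsub1
  have hB : IntervalIntegrable (fun ω => f ω * (Real.cos (ω * T) - c)) volume Γ (π / T) :=
    hIfc.mono_set hsub2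
  have hC : IntervalIntegrable (fun ω => αM * (Real.cos (ω * T) - c)) volume 0 Γ :=
    (continuous_const.mul hcont).intervalIntegrable _ _
  -- pointwise comparisons
  have key1 : (∫ ω in (0:ℝ)..Γ, f ω * (Real.cos (ω * T) - c)) ≤
      ∫ ω in (0:ℝ)..Γ, αM * (Real.cos (ω * T) - c) := by
    apply intervalIntegral.integral_mono_on hΓpos.le hA hC
    intro ω hω
    have hω0 : 0 ≤ ω := hω.1
    have hωΓ : ω ≤ Γ := hω.2
    have hmem : ω ∈ Set.Icc 0 (π / T) := ⟨hω0, le_trans hωΓ hΓ⟩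
    have hcos : c ≤ Real.cos (ω * T) :=
      Real.cos_le_cos_of_nonneg_of_le_pi (by positivity) hΓT
        (by nlinarith)
    exact mul_le_mul_of_nonneg_right (hbound ω hmem).2 (by linarith)
  have key2 : (∫ ω in Γ..(π / T), f ω * (Real.cos (ω * T) - c)) ≤ 0 := by
    have h0 : (∫ ω in Γ..(π / T), (0:ℝ)) = 0 := by simp
    rw [← h0]
    apply intervalIntegral.integral_mono_on hΓ hB (intervalIntegrable_const)
    intro ω hω
    have hω0 : 0 ≤ ω := le_trans hΓpos.le hω.1
    have hmem : ω ∈ Set.Icc 0 (π / T) := ⟨hω0, hω.2⟩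
    have hωT : ω * T ≤ π := by
      rw [← le_div_iff₀ hT]; exact hω.2
    have hcos : Real.cos (ω * T) ≤ c :=
      Real.cos_le_cos_of_nonneg_of_le_pi (by positivity) hωT
        (by nlinarith [hω.1])
    exact mul_nonpos_of_nonneg_of_nonpos (hbound ω hmem).1 (by linarith)
  -- splitting identities
  have split : (∫ ω in (0:ℝ)..(π / T), f ω * (Real.cos (ω * T) - c)) =
      (∫ ω in (0:ℝ)..Γ, f ω * (Real.cos (ω * T) - c)) +
      ∫ ω in Γ..(π / T), f ω * (Real.cos (ω * T) - c) :=
    (intervalIntegral.integral_add_adjacent_intervals hA hB).symm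
  have hfc : IntervalIntegrable (fun ω => f ω * c) volume 0 (π / T) := hint.mul_const c
  have expandL : (∫ ω in (0:ℝ)..(π / T), f ω * Real.cos (ω * T)) =
      (∫ ω in (0:ℝ)..(π / T), f ω * (Real.cos (ω * T) - c)) + αM * Γ * c := by
    have h1 : (∫ ω in (0:ℝ)..(π / T), f ω * Real.cos (ω * T)) =
        ∫ ω in (0:ℝ)..(π / T), (f ω * (Real.cos (ω * T) - c) + f ω * c) := by
      congr 1; funext ω; ring
    rw [h1, intervalIntegral.integral_add hIfc hfc, intervalIntegral.integral_mul_const, harea]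
  have expandR : (∫ ω in (0:ℝ)..Γ, αM * Real.cos (ω * T)) =
      (∫ ω in (0:ℝ)..Γ, αM * (Real.cos (ω * T) - c)) + αM * Γ * c := by
    have h1 : (∫ ω in (0:ℝ)..Γ, αM * Real.cos (ω * T)) =
        ∫ ω in (0:ℝ)..Γ, (αM * (Real.cos (ω * T) - c) + αM * c) := by
      congr 1; funext ω; ring
    rw [h1, intervalIntegral.integral_add hC
      (intervalIntegrable_const), intervalIntegral.integral_const]
    simp; ring
  linarith [key1, key2, split, expandL, expandR]
end

section
/- For any integrable function f on [0, π/T] with 0 ≤ f(ω) ≤ α_M and ∫₀^{π/T} f(ω) dω = α_M·Γ where 0 ≤ Γ ≤ π/T, one has |∫₀^{π/T} f(ω)·cos(ωT) dω| ≤ ∫₀^Γ α_M·cos(ωT) dω = (α_M/T)·sin(ΓT). -/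
open Real MeasureTheory intervalIntegral

private lemma cos_integral_eval (T αM a b : ℝ) (hT : 0 < T) :
    ∫ ω in a..b, αM * Real.cos (ω * T)
      = (αM / T) * (Real.sin (b * T) - Real.sin (a * T)) := by
  rw [intervalIntegral.integral_const_mul,
    intervalIntegral.integral_comp_mul_right Real.cos hT.ne', integral_cos]
  simp only [smul_eq_mul]
  field_simp

theorem square_tooth_optimal_abs
    (T αM Γ : ℝ) (hT : 0 < T) (hα : 0 < αM)
    (hΓ0 : 0 ≤ Γ) (hΓ : Γ ≤ π / T)
    (f : ℝ → ℝ)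
    (hint : IntervalIntegrable f volume 0 (π / T))
    (hbound : ∀ ω ∈ Set.Icc 0 (π / T), 0 ≤ f ω ∧ f ω ≤ αM)
    (harea : ∫ ω in (0:ℝ)..(π / T), f ω = αM * Γ) :
    |∫ ω in (0:ℝ)..(π / T), f ω * Real.cos (ω * T)| ≤
      ∫ ω in (0:ℝ)..Γ, αM * Real.cos (ω * T) ∧
    (∫ ω in (0:ℝ)..Γ, αM * Real.cos (ω * T)) = (αM / T) * Real.sin (Γ * T) := by
  set P := π / T with hPdef
  have hP0 : 0 < P := div_pos Real.pi_pos hT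
  have hPT : P * T = π := div_mul_cancel₀ π hT.ne'
  have hΓT : Γ * T ≤ π := by
    rw [← hPT]; exact mul_le_mul_of_nonneg_right hΓ hT.le
  have hΓT0 : 0 ≤ Γ * T := mul_nonneg hΓ0 hT.le
  -- evaluation part
  have heval : (∫ ω in (0:ℝ)..Γ, αM * Real.cos (ω * T)) = (αM / T) * Real.sin (Γ * T) := by
    rw [cos_integral_eval T αM 0 Γ hT]; simp
  refine ⟨?_, heval⟩
  -- continuous cosine factor
  have hcos : Continuous fun ω : ℝ => Real.cos (ω * T) :=
    Real.continuous_cos.comp (continuous_mul_right T)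
  -- integrability of f on subintervals
  have hsub : ∀ a b : ℝ, 0 ≤ a → b ≤ P → a ≤ b → IntervalIntegrable f volume a b := by
    intro a b ha hb hab
    refine hint.mono_set ?_
    rw [Set.uIcc_of_le hab, Set.uIcc_of_le hP0.le]
    exact Set.Icc_subset_Icc ha hb
  have hfc : ∀ a b : ℝ, 0 ≤ a → b ≤ P → a ≤ b →
      IntervalIntegrable (fun ω => f ω * Real.cos (ω * T)) volume a b := by
    intro a b ha hb hab
    exact (hsub a b ha hb hab).mul_continuousOn hcos.continuousOn
  set Γ' := P - Γ with hΓ'def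
  have hΓ'0 : 0 ≤ Γ' := sub_nonneg.mpr hΓ
  have hΓ'P : Γ' ≤ P := by simp [hΓ'def, hΓ0]
  have hΓ'T : Γ' * T = π - Γ * T := by rw [hΓ'def, sub_mul, hPT]
  -- splitting area integral
  have hsplit : (∫ ω in (0:ℝ)..Γ, f ω) + ∫ ω in Γ..P, f ω = αM * Γ := by
    rw [intervalIntegral.integral_add_adjacent_intervals (hsub 0 Γ le_rfl hΓ hΓ0)
      (hsub Γ P hΓ0 le_rfl hΓ)]
    exact harea
  have hsplit' : (∫ ω in (0:ℝ)..Γ', f ω) + ∫ ω in Γ'..P, f ω = αM * Γ := by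
    rw [intervalIntegral.integral_add_adjacent_intervals (hsub 0 Γ' le_rfl hΓ'P hΓ'0)
      (hsub Γ' P hΓ'0 le_rfl hΓ'P)]
    exact harea
  -- pointwise bounds on f
  have hf0 : ∀ ω ∈ Set.Icc 0 P, 0 ≤ f ω := fun ω hω => (hbound ω hω).1
  have hfM : ∀ ω ∈ Set.Icc 0 P, f ω ≤ αM := fun ω hω => (hbound ω hω).2
  -- UPPER BOUND
  have hup : (∫ ω in (0:ℝ)..P, f ω * Real.cos (ω * T)) ≤ (αM / T) * Real.sin (Γ * T) := by
    have hA : (∫ ω in Γ..P, f ω * Real.cos (ω * T))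
        ≤ Real.cos (Γ * T) * ∫ ω in Γ..P, f ω := by
      rw [← intervalIntegral.integral_const_mul]
      apply intervalIntegral.integral_mono_on hΓ (hfc Γ P hΓ0 le_rfl hΓ)
        (((hsub Γ P hΓ0 le_rfl hΓ)).const_mul _)
      intro ω hω
      have h1 : Real.cos (ω * T) ≤ Real.cos (Γ * T) :=
        Real.cos_le_cos_of_nonneg_of_le_pi hΓT0
          (by rw [← hPT]; exact mul_le_mul_of_nonneg_right hω.2 hT.le)
          (mul_le_mul_of_nonneg_right hω.1 hT.le)
      have h2 : 0 ≤ f ω := hf0 ω ⟨hΓ0.trans hω.1, hω.2⟩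
      calc f ω * Real.cos (ω * T) ≤ f ω * Real.cos (Γ * T) :=
            mul_le_mul_of_nonneg_left h1 h2
        _ = Real.cos (Γ * T) * f ω := mul_comm _ _
    have hB : Real.cos (Γ * T) * (∫ ω in (0:ℝ)..Γ, (αM - f ω))
        ≤ ∫ ω in (0:ℝ)..Γ, (αM - f ω) * Real.cos (ω * T) := by
      rw [← intervalIntegral.integral_const_mul]
      have hi : IntervalIntegrable (fun ω => αM - f ω) volume 0 Γ :=
        (_root_.intervalIntegrable_const).sub (hsub 0 Γ le_rfl hΓ hΓ0)
      apply intervalIntegral.integral_mono_on hΓ0 (hi.const_mul _)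
        (hi.mul_continuousOn hcos.continuousOn)
      intro ω hω
      have h1 : Real.cos (Γ * T) ≤ Real.cos (ω * T) :=
        Real.cos_le_cos_of_nonneg_of_le_pi (mul_nonneg hω.1 hT.le) hΓT
          (mul_le_mul_of_nonneg_right hω.2 hT.le)
      have h2 : 0 ≤ αM - f ω := sub_nonneg.mpr (hfM ω ⟨hω.1, hω.2.trans hΓ⟩)
      calc Real.cos (Γ * T) * (αM - f ω) = (αM - f ω) * Real.cos (Γ * T) := mul_comm _ _
        _ ≤ (αM - f ω) * Real.cos (ω * T) := mul_le_mul_of_nonneg_left h1 h2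
    have harea2 : (∫ ω in (0:ℝ)..Γ, (αM - f ω)) = ∫ ω in Γ..P, f ω := by
      rw [intervalIntegral.integral_sub _root_.intervalIntegrable_const (hsub 0 Γ le_rfl hΓ hΓ0)]
      simp only [intervalIntegral.integral_const, smul_eq_mul, sub_zero]
      linarith [hsplit]
    have hBC : (∫ ω in (0:ℝ)..Γ, (αM - f ω) * Real.cos (ω * T))
        = (∫ ω in (0:ℝ)..Γ, αM * Real.cos (ω * T)) - ∫ ω in (0:ℝ)..Γ, f ω * Real.cos (ω * T) := by
      rw [← intervalIntegral.integral_sub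
        ((_root_.intervalIntegrable_const).mul_continuousOn hcos.continuousOn)
        (hfc 0 Γ le_rfl hΓ hΓ0)]
      congr 1; ext ω; ring
    have hsplitc : (∫ ω in (0:ℝ)..P, f ω * Real.cos (ω * T))
        = (∫ ω in (0:ℝ)..Γ, f ω * Real.cos (ω * T)) + ∫ ω in Γ..P, f ω * Real.cos (ω * T) := by
      rw [intervalIntegral.integral_add_adjacent_intervals (hfc 0 Γ le_rfl hΓ hΓ0)
        (hfc Γ P hΓ0 le_rfl hΓ)]
    rw [← heval, hsplitc]
    rw [harea2] at hB
    linarith [hB, hA, hBC]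
  -- LOWER BOUND
  have hlo : -((αM / T) * Real.sin (Γ * T)) ≤ ∫ ω in (0:ℝ)..P, f ω * Real.cos (ω * T) := by
    have c := Real.cos (Γ' * T)
    have hA : Real.cos (Γ' * T) * (∫ ω in (0:ℝ)..Γ', f ω)
        ≤ ∫ ω in (0:ℝ)..Γ', f ω * Real.cos (ω * T) := by
      rw [← intervalIntegral.integral_const_mul]
      apply intervalIntegral.integral_mono_on hΓ'0
        ((hsub 0 Γ' le_rfl hΓ'P hΓ'0).const_mul _) (hfc 0 Γ' le_rfl hΓ'P hΓ'0)
      intro ω hω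
      have h1 : Real.cos (Γ' * T) ≤ Real.cos (ω * T) :=
        Real.cos_le_cos_of_nonneg_of_le_pi (mul_nonneg hω.1 hT.le)
          (by rw [← hPT]; exact mul_le_mul_of_nonneg_right hΓ'P hT.le)
          (mul_le_mul_of_nonneg_right hω.2 hT.le)
      have h2 : 0 ≤ f ω := hf0 ω ⟨hω.1, hω.2.trans hΓ'P⟩
      calc Real.cos (Γ' * T) * f ω = f ω * Real.cos (Γ' * T) := mul_comm _ _
        _ ≤ f ω * Real.cos (ω * T) := mul_le_mul_of_nonneg_left h1 h2
    have hB : (∫ ω in Γ'..P, (αM - f ω) * Real.cos (ω * T))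
        ≤ Real.cos (Γ' * T) * ∫ ω in Γ'..P, (αM - f ω) := by
      rw [← intervalIntegral.integral_const_mul]
      have hi : IntervalIntegrable (fun ω => αM - f ω) volume Γ' P :=
        (_root_.intervalIntegrable_const).sub (hsub Γ' P hΓ'0 le_rfl hΓ'P)
      apply intervalIntegral.integral_mono_on hΓ'P
        (hi.mul_continuousOn hcos.continuousOn) (hi.const_mul _)
      intro ω hω
      have h1 : Real.cos (ω * T) ≤ Real.cos (Γ' * T) :=
        Real.cos_le_cos_of_nonneg_of_le_pi (mul_nonneg hΓ'0 hT.le)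
          (by rw [← hPT]; exact mul_le_mul_of_nonneg_right hω.2 hT.le)
          (mul_le_mul_of_nonneg_right hω.1 hT.le)
      have h2 : 0 ≤ αM - f ω := sub_nonneg.mpr (hfM ω ⟨hΓ'0.trans hω.1, hω.2⟩)
      calc (αM - f ω) * Real.cos (ω * T) ≤ (αM - f ω) * Real.cos (Γ' * T) :=
            mul_le_mul_of_nonneg_left h1 h2
        _ = Real.cos (Γ' * T) * (αM - f ω) := mul_comm _ _
    have harea2 : (∫ ω in Γ'..P, (αM - f ω)) = ∫ ω in (0:ℝ)..Γ', f ω := by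
      rw [intervalIntegral.integral_sub _root_.intervalIntegrable_const (hsub Γ' P hΓ'0 le_rfl hΓ'P)]
      simp only [intervalIntegral.integral_const, smul_eq_mul]
      have : αM * (P - Γ') = αM * Γ := by rw [hΓ'def]; ring_nf
      linarith [hsplit', this]
    have hBC : (∫ ω in Γ'..P, (αM - f ω) * Real.cos (ω * T))
        = (∫ ω in Γ'..P, αM * Real.cos (ω * T)) - ∫ ω in Γ'..P, f ω * Real.cos (ω * T) := by
      rw [← intervalIntegral.integral_sub
        ((_root_.intervalIntegrable_const).mul_continuousOn hcos.continuousOn)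
        (hfc Γ' P hΓ'0 le_rfl hΓ'P)]
      congr 1; ext ω; ring
    have htail : (∫ ω in Γ'..P, αM * Real.cos (ω * T)) = -((αM / T) * Real.sin (Γ * T)) := by
      rw [cos_integral_eval T αM Γ' P hT, hPT, hΓ'T, Real.sin_pi, Real.sin_pi_sub]
      ring
    have hsplitc : (∫ ω in (0:ℝ)..P, f ω * Real.cos (ω * T))
        = (∫ ω in (0:ℝ)..Γ', f ω * Real.cos (ω * T)) + ∫ ω in Γ'..P, f ω * Real.cos (ω * T) := by
      rw [intervalIntegral.integral_add_adjacent_intervals (hfc 0 Γ' le_rfl hΓ'P hΓ'0)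
        (hfc Γ' P hΓ'0 le_rfl hΓ'P)]
    rw [hsplitc]
    rw [harea2] at hB
    linarith [hA, hB, hBC, htail]
  rw [abs_le]
  exact ⟨by rw [heval]; exact hlo, by rw [heval]; exact hup⟩
end

section
/- For any integrable function f on [-π/T, π/T] with 0 ≤ f(ω) ≤ α_M and total area ∫_{-π/T}^{π/T} f(ω) dω = S, one has |∫_{-π/T}^{π/T} f(ω)·cos(ωT) dω| ≤ ∫_{-S/(2α_M)}^{S/(2α_M)} α_M·cos(ωT) dω = (2α_M/T)·sin(ST/(2α_M)), provided S ≤ 2π·α_M/T and f satisfies the phase-centering condition ∫_{-π/T}^{π/T} f(ω)·sin(ωT) dω = 0. -/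
open Real MeasureTheory intervalIntegral

set_option maxHeartbeats 1000000

theorem square_tooth_optimal_general
    (T αM S : ℝ) (hT : 0 < T) (hα : 0 < αM)
    (hS : S ≤ 2 * π * αM / T)
    (f : ℝ → ℝ)
    (hint : IntervalIntegrable f volume (-(π / T)) (π / T))
    (hbound : ∀ ω ∈ Set.Icc (-(π / T)) (π / T), 0 ≤ f ω ∧ f ω ≤ αM)
    (harea : ∫ ω in (-(π / T))..(π / T), f ω = S)
    (hsin : ∫ ω in (-(π / T))..(π / T), f ω * Real.sin (ω * T) = 0) :
    |∫ ω in (-(π / T))..(π / T), f ω * Real.cos (ω * T)| ≤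
      ∫ ω in (-(S / (2 * αM)))..(S / (2 * αM)), αM * Real.cos (ω * T) ∧
    (∫ ω in (-(S / (2 * αM)))..(S / (2 * αM)), αM * Real.cos (ω * T))
      = (2 * αM / T) * Real.sin (S * T / (2 * αM)) := by
  have hπ := Real.pi_pos
  set L : ℝ := π / T with hLdef
  set a : ℝ := S / (2 * αM) with hadef
  have hLpos : 0 < L := div_pos hπ hT
  have hLL : -L ≤ L := by linarith
  have hS0 : 0 ≤ S := by
    rw [← harea]
    exact intervalIntegral.integral_nonneg hLL (fun u hu => (hbound u hu).1)
  have ha0 : 0 ≤ a := div_nonneg hS0 (by linarith)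
  have haL : a ≤ L := by
    have h1 : S * T ≤ 2 * π * αM := (le_div_iff₀ hT).mp hS
    rw [hadef, hLdef, div_le_div_iff₀ (by linarith) hT]
    nlinarith
  have haT : a * T ≤ π := by
    have := mul_le_mul_of_nonneg_right haL hT.le
    rwa [hLdef, div_mul_cancel₀ _ (ne_of_gt hT)] at this
  have hLT : L * T = π := by rw [hLdef]; field_simp
  -- basic cosine integral
  have hacos : ∀ u v : ℝ, (∫ ω in u..v, Real.cos (ω * T))
      = (Real.sin (v * T) - Real.sin (u * T)) / T := by
    intro u v
    rw [intervalIntegral.integral_comp_mul_right Real.cos (ne_of_gt hT), integral_cos,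
      smul_eq_mul]
    ring
  have hcontcos : Continuous (fun ω : ℝ => Real.cos (ω * T)) := by continuity
  have hccos : ∀ u v k : ℝ, (∫ ω in u..v, αM * (Real.cos (ω * T) - k))
      = αM * ((Real.sin (v * T) - Real.sin (u * T)) / T - k * (v - u)) := by
    intro u v k
    rw [intervalIntegral.integral_const_mul]
    congr 1
    rw [intervalIntegral.integral_sub (hcontcos.intervalIntegrable u v)
      (intervalIntegrable_const), hacos, intervalIntegral.integral_const, smul_eq_mul]
    ring
  -- cos(ωT) = cos(|ω|T)
  have habs : ∀ ω : ℝ, Real.cos (ω * T) = Real.cos (|ω| * T) := by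
    intro ω
    rcases abs_cases ω with ⟨h, _⟩ | ⟨h, _⟩
    · rw [h]
    · rw [h, neg_mul, Real.cos_neg]
  have hmono : ∀ x y : ℝ, 0 ≤ x → x ≤ y → y * T ≤ π →
      Real.cos (y * T) ≤ Real.cos (x * T) :=
    fun x y hx hxy hy => Real.cos_le_cos_of_nonneg_of_le_pi (by positivity) hy
      (by nlinarith)
  set c : ℝ := Real.cos (a * T) with hcdef
  set b : ℝ := L - a with hbdef
  have hb0 : 0 ≤ b := by linarith
  have hbL : b ≤ L := by linarith
  have hbT : b * T = π - a * T := by rw [hbdef, sub_mul, hLT]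
  have hcb : Real.cos (b * T) = -c := by rw [hbT, Real.cos_pi_sub]
  -- cos comparisons
  have hcos_le : ∀ ω : ℝ, a ≤ |ω| → |ω| ≤ L → Real.cos (ω * T) ≤ c := by
    intro ω h1 h2
    rw [habs ω]
    exact hmono a |ω| ha0 h1 (le_of_le_of_eq (mul_le_mul_of_nonneg_right h2 hT.le) hLT)
  have hcos_ge : ∀ ω : ℝ, |ω| ≤ a → c ≤ Real.cos (ω * T) := by
    intro ω h1
    rw [habs ω]
    exact hmono |ω| a (abs_nonneg ω) h1 haT
  have hcos_le' : ∀ ω : ℝ, b ≤ |ω| → |ω| ≤ L → Real.cos (ω * T) ≤ -c := by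
    intro ω h1 h2
    rw [habs ω, ← hcb]
    exact hmono b |ω| hb0 h1 (le_of_le_of_eq (mul_le_mul_of_nonneg_right h2 hT.le) hLT)
  have hcos_ge' : ∀ ω : ℝ, |ω| ≤ b → -c ≤ Real.cos (ω * T) := by
    intro ω h1
    rw [habs ω, ← hcb]
    exact hmono |ω| b (abs_nonneg ω) h1 (by rw [hbT]; linarith [mul_nonneg ha0 hT.le])
  have hSa : 2 * a * αM = S := by
    rw [hadef]; field_simp
  -- integrability helpers
  have hintf : ∀ k : ℝ, IntervalIntegrable (fun ω => f ω * (Real.cos (ω * T) - k))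
      volume (-L) L := by
    intro k
    exact hint.mul_continuousOn ((Real.continuous_cos.comp
      (continuous_id.mul continuous_const)).sub continuous_const).continuousOn
  have hcontmax : Continuous (fun ω => αM * max (Real.cos (ω * T) - c) 0) :=
    continuous_const.mul (((Real.continuous_cos.comp
      (continuous_id.mul continuous_const)).sub continuous_const).max continuous_const)
  have hcontmin : Continuous (fun ω => αM * min (Real.cos (ω * T) + c) 0) :=
    continuous_const.mul (((Real.continuous_cos.comp
      (continuous_id.mul continuous_const)).add continuous_const).min continuous_const)
  -- decompositions ∫ f*(cos∓c) = X ∓ c S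
  have hdec : ∀ k : ℝ, (∫ ω in (-L)..L, f ω * (Real.cos (ω * T) - k))
      = (∫ ω in (-L)..L, f ω * Real.cos (ω * T)) - k * S := by
    intro k
    have h1 : IntervalIntegrable (fun ω => f ω * Real.cos (ω * T)) volume (-L) L :=
      hint.mul_continuousOn (Real.continuous_cos.comp
        (continuous_id.mul continuous_const)).continuousOn
    have h2 : IntervalIntegrable (fun ω => k * f ω) volume (-L) L :=
      hint.const_mul k
    calc (∫ ω in (-L)..L, f ω * (Real.cos (ω * T) - k))
        = ∫ ω in (-L)..L, (f ω * Real.cos (ω * T) - k * f ω) := by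
          apply intervalIntegral.integral_congr; intro ω _; ring
      _ = (∫ ω in (-L)..L, f ω * Real.cos (ω * T)) - ∫ ω in (-L)..L, k * f ω :=
          intervalIntegral.integral_sub h1 h2
      _ = (∫ ω in (-L)..L, f ω * Real.cos (ω * T)) - k * S := by
          rw [intervalIntegral.integral_const_mul, harea]
  set X : ℝ := ∫ ω in (-L)..L, f ω * Real.cos (ω * T) with hXdef
  set M : ℝ := 2 * αM * Real.sin (a * T) / T with hMdef
  -- value of the target integral
  have htarget : (∫ ω in (-a)..a, αM * Real.cos (ω * T)) = M := by
    rw [intervalIntegral.integral_const_mul, hacos, hMdef, neg_mul, Real.sin_neg]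
    ring
  -- UPPER BOUND
  have hsplitU : (∫ ω in (-L)..L, αM * max (Real.cos (ω * T) - c) 0)
      = ∫ ω in (-a)..a, αM * (Real.cos (ω * T) - c) := by
    have hi : ∀ u v : ℝ, IntervalIntegrable
        (fun ω => αM * max (Real.cos (ω * T) - c) 0) volume u v :=
      fun u v => hcontmax.intervalIntegrable u v
    rw [← intervalIntegral.integral_add_adjacent_intervals (b := -a) (hi _ _) (hi _ _),
        ← intervalIntegral.integral_add_adjacent_intervals (a := -a) (b := a) (hi _ _) (hi _ _)]
    have hz1 : (∫ ω in (-L)..(-a), αM * max (Real.cos (ω * T) - c) 0) = 0 := by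
      rw [intervalIntegral.integral_congr (g := fun _ => (0:ℝ)), intervalIntegral.integral_zero]
      intro ω hω
      rw [Set.uIcc_of_le (by linarith)] at hω
      have h1 : a ≤ |ω| := by rw [abs_of_nonpos (by linarith [hω.2] : ω ≤ 0)]; linarith [hω.2]
      have h2 : |ω| ≤ L := by rw [abs_of_nonpos (by linarith [hω.2] : ω ≤ 0)]; linarith [hω.1]
      simp [max_eq_right (sub_nonpos.mpr (hcos_le ω h1 h2))]
    have hz2 : (∫ ω in a..L, αM * max (Real.cos (ω * T) - c) 0) = 0 := by
      rw [intervalIntegral.integral_congr (g := fun _ => (0:ℝ)), intervalIntegral.integral_zero]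
      intro ω hω
      rw [Set.uIcc_of_le haL] at hω
      have h1 : a ≤ |ω| := by rw [abs_of_nonneg (by linarith [hω.1] : 0 ≤ ω)]; exact hω.1
      have h2 : |ω| ≤ L := by rw [abs_of_nonneg (by linarith [hω.1] : 0 ≤ ω)]; exact hω.2
      simp [max_eq_right (sub_nonpos.mpr (hcos_le ω h1 h2))]
    have hm : (∫ ω in (-a)..a, αM * max (Real.cos (ω * T) - c) 0)
        = ∫ ω in (-a)..a, αM * (Real.cos (ω * T) - c) := by
      apply intervalIntegral.integral_congr
      intro ω hω
      rw [Set.uIcc_of_le (by linarith)] at hω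
      have h1 : |ω| ≤ a := abs_le.mpr ⟨hω.1, hω.2⟩
      simp [max_eq_left (sub_nonneg.mpr (hcos_ge ω h1))]
    rw [hz1, hz2, hm]; ring
  have hupper : X ≤ M := by
    have hle : (∫ ω in (-L)..L, f ω * (Real.cos (ω * T) - c))
        ≤ ∫ ω in (-L)..L, αM * max (Real.cos (ω * T) - c) 0 := by
      apply intervalIntegral.integral_mono_on hLL (hintf c)
        (hcontmax.intervalIntegrable _ _)
      intro u hu
      obtain ⟨hf0, hfα⟩ := hbound u hu
      rcases le_or_gt 0 (Real.cos (u * T) - c) with h | h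
      · rw [max_eq_left h]; exact mul_le_mul_of_nonneg_right hfα h
      · rw [max_eq_right h.le, mul_zero]; exact mul_nonpos_of_nonneg_of_nonpos hf0 h.le
    rw [hdec c, hsplitU, hccos] at hle
    have : αM * ((Real.sin (a * T) - Real.sin (-a * T)) / T - c * (a - -a))
        = M - c * S := by
      rw [hMdef, ← hSa, neg_mul, Real.sin_neg]; ring
    rw [this] at hle
    exact (sub_le_sub_iff_right (c * S)).mp hle
  -- LOWER BOUND
  have hsplitL : (∫ ω in (-L)..L, αM * min (Real.cos (ω * T) + c) 0)
      = (∫ ω in (-L)..(-b), αM * (Real.cos (ω * T) - -c))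
        + ∫ ω in b..L, αM * (Real.cos (ω * T) - -c) := by
    have hi : ∀ u v : ℝ, IntervalIntegrable
        (fun ω => αM * min (Real.cos (ω * T) + c) 0) volume u v :=
      fun u v => hcontmin.intervalIntegrable u v
    rw [← intervalIntegral.integral_add_adjacent_intervals (b := -b) (hi _ _) (hi _ _),
        ← intervalIntegral.integral_add_adjacent_intervals (a := -b) (b := b) (hi _ _) (hi _ _)]
    have hz : (∫ ω in (-b)..b, αM * min (Real.cos (ω * T) + c) 0) = 0 := by
      rw [intervalIntegral.integral_congr (g := fun _ => (0:ℝ)), intervalIntegral.integral_zero]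
      intro ω hω
      rw [Set.uIcc_of_le (by linarith)] at hω
      have h1 : |ω| ≤ b := abs_le.mpr ⟨hω.1, hω.2⟩
      have := hcos_ge' ω h1
      simp [min_eq_right (by linarith : 0 ≤ Real.cos (ω * T) + c)]
    have he1 : (∫ ω in (-L)..(-b), αM * min (Real.cos (ω * T) + c) 0)
        = ∫ ω in (-L)..(-b), αM * (Real.cos (ω * T) - -c) := by
      apply intervalIntegral.integral_congr
      intro ω hω
      rw [Set.uIcc_of_le (by linarith)] at hω
      have h1 : b ≤ |ω| := by rw [abs_of_nonpos (by linarith [hω.2] : ω ≤ 0)]; linarith [hω.2]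
      have h2 : |ω| ≤ L := by rw [abs_of_nonpos (by linarith [hω.2] : ω ≤ 0)]; linarith [hω.1]
      have := hcos_le' ω h1 h2
      show αM * min (Real.cos (ω * T) + c) 0 = αM * (Real.cos (ω * T) - -c)
      rw [min_eq_left (by linarith : Real.cos (ω * T) + c ≤ 0)]
      ring
    have he2 : (∫ ω in b..L, αM * min (Real.cos (ω * T) + c) 0)
        = ∫ ω in b..L, αM * (Real.cos (ω * T) - -c) := by
      apply intervalIntegral.integral_congr
      intro ω hω
      rw [Set.uIcc_of_le hbL] at hω
      have h1 : b ≤ |ω| := by rw [abs_of_nonneg (by linarith [hω.1] : 0 ≤ ω)]; exact hω.1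
      have h2 : |ω| ≤ L := by rw [abs_of_nonneg (by linarith [hω.1] : 0 ≤ ω)]; exact hω.2
      have := hcos_le' ω h1 h2
      show αM * min (Real.cos (ω * T) + c) 0 = αM * (Real.cos (ω * T) - -c)
      rw [min_eq_left (by linarith : Real.cos (ω * T) + c ≤ 0)]
      ring
    rw [hz, he1, he2]; ring
  have hlower : -M ≤ X := by
    have hge : (∫ ω in (-L)..L, αM * min (Real.cos (ω * T) + c) 0)
        ≤ ∫ ω in (-L)..L, f ω * (Real.cos (ω * T) - -c) := by
      apply intervalIntegral.integral_mono_on hLL (hcontmin.intervalIntegrable _ _)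
        (hintf (-c))
      intro u hu
      obtain ⟨hf0, hfα⟩ := hbound u hu
      rcases le_or_gt 0 (Real.cos (u * T) + c) with h | h
      · rw [min_eq_right h, mul_zero, sub_neg_eq_add]
        exact mul_nonneg hf0 h
      · rw [min_eq_left h.le, sub_neg_eq_add]
        nlinarith
    rw [hdec (-c), hsplitL, hccos, hccos] at hge
    have hsinb : Real.sin (b * T) = Real.sin (a * T) := by
      rw [hbT, Real.sin_pi_sub]
    have hsinL : Real.sin (L * T) = 0 := by rw [hLT, Real.sin_pi]
    have hsinnb : Real.sin (-b * T) = -Real.sin (a * T) := by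
      rw [neg_mul, Real.sin_neg, hsinb]
    have hsinnL : Real.sin (-L * T) = 0 := by rw [neg_mul, Real.sin_neg, hsinL, neg_zero]
    rw [hsinnb, hsinnL, hsinL, hsinb] at hge
    have hLb : L - b = a := by rw [hbdef]; ring
    have : αM * ((-Real.sin (a * T) - 0) / T - -c * (-b - -L))
        + αM * ((0 - Real.sin (a * T)) / T - -c * (L - b)) = -M + c * S := by
      rw [hMdef, ← hSa]
      have h1 : -b - -L = a := by rw [hbdef]; ring
      rw [h1, hLb]; ring
    rw [this] at hge
    linarith
  constructor
  · rw [htarget]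
    exact abs_le.mpr ⟨hlower, hupper⟩
  · rw [htarget, hMdef, show S * T / (2 * αM) = a * T by rw [hadef]; ring]
    ring
end

section
/- The function η_S(p, OD) = (OD²·sin²(p)/π²)·exp(-p·OD/π), for fixed OD > 0 and p ∈ (0, π), attains its unique maximum at p = arctan(2π/OD), i.e., the optimal dimensionless square-tooth width satisfies tan(p_opt) = 2π/OD. -/
open Real

theorem square_tooth_efficiency_unique_max
    (OD : ℝ) (hOD : 0 < OD) :
    ∀ p ∈ Set.Ioo (0:ℝ) π, p ≠ Real.arctan (2 * π / OD) →
      (OD ^ 2 * Real.sin p ^ 2 / π ^ 2) * Real.exp (-(p * OD / π)) <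
        (OD ^ 2 * Real.sin (Real.arctan (2 * π / OD)) ^ 2 / π ^ 2) *
          Real.exp (-(Real.arctan (2 * π / OD) * OD / π)) := by
  have hπ := Real.pi_pos
  set k := OD / π with hk
  have hkpos : 0 < k := div_pos hOD hπ
  set p₀ := Real.arctan (2 * π / OD) with hp0def
  have hratio : 2 * π / OD = 2 / k := by
    rw [hk]; field_simp
  have hp0pos : 0 < p₀ := by
    have h := Real.arctan_strictMono (show (0:ℝ) < 2 * π / OD by positivity)
    rwa [Real.arctan_zero] at h
  have hp0lt : p₀ < π / 2 := Real.arctan_lt_pi_div_two _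
  have htan : Real.tan p₀ = 2 / k := by rw [hp0def, hratio, Real.tan_arctan]
  set f : ℝ → ℝ := fun p =>
    (OD ^ 2 * Real.sin p ^ 2 / π ^ 2) * Real.exp (-(p * OD / π)) with hf
  have hderiv : ∀ p, HasDerivAt f
      ((OD ^ 2 / π ^ 2) * Real.exp (-(p * OD / π)) *
        (Real.sin p * (2 * Real.cos p - k * Real.sin p))) p := by
    intro p
    have h1 : HasDerivAt (fun x => Real.sin x ^ 2) (2 * Real.sin p * Real.cos p) p := by
      simpa using (Real.hasDerivAt_sin p).fun_pow 2
    have h2 : HasDerivAt (fun x => Real.exp (-(x * OD / π)))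
        (Real.exp (-(p * OD / π)) * (-(OD / π))) p := by
      have h3 : HasDerivAt (fun x : ℝ => -(x * OD / π)) (-(OD / π)) p := by
        simpa using (((hasDerivAt_id p).mul_const OD).div_const π).fun_neg
      exact h3.exp
    have : HasDerivAt (fun y => OD ^ 2 / π ^ 2 * (Real.sin y ^ 2 * Real.exp (-(y * OD / π))))
        (OD ^ 2 / π ^ 2 * (2 * Real.sin p * Real.cos p * Real.exp (-(p * OD / π)) +
          Real.sin p ^ 2 * (Real.exp (-(p * OD / π)) * -(OD / π)))) p :=
      (h1.fun_mul h2).const_mul (OD ^ 2 / π ^ 2)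
    convert this using 1
    · ext x; rw [hf]; ring
    · rw [hk]; ring
  -- sign of the derivative factor
  have hsinpos : ∀ p ∈ Set.Ioo (0:ℝ) π, 0 < Real.sin p :=
    fun p hp => Real.sin_pos_of_pos_of_lt_pi hp.1 hp.2
  have hpos : ∀ p ∈ Set.Ioo (0:ℝ) p₀, 0 < 2 * Real.cos p - k * Real.sin p := by
    intro p hp
    have hcos : 0 < Real.cos p := Real.cos_pos_of_mem_Ioo
      ⟨by linarith [hp.1, neg_neg_iff_pos.2 (by positivity : (0:ℝ) < π/2)], lt_trans hp.2 hp0lt⟩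
    have htlt : Real.tan p < Real.tan p₀ :=
      Real.tan_lt_tan_of_nonneg_of_lt_pi_div_two hp.1.le hp0lt hp.2
    rw [htan] at htlt
    have : k * Real.tan p < 2 := by
      have := (mul_lt_mul_iff_right₀ hkpos).2 htlt
      rwa [mul_div_cancel₀ 2 (ne_of_gt hkpos)] at this
    have hsin : Real.sin p = Real.tan p * Real.cos p := by
      rw [Real.tan_eq_sin_div_cos]; field_simp
    rw [hsin]
    nlinarith [hcos]
  have hneg : ∀ p ∈ Set.Ioo p₀ π, 2 * Real.cos p - k * Real.sin p < 0 := by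
    intro p hp
    rcases lt_or_ge p (π / 2) with hlt | hge
    · have hcos : 0 < Real.cos p := Real.cos_pos_of_mem_Ioo
        ⟨by linarith [hp.1, hp0pos], hlt⟩
      have htlt : Real.tan p₀ < Real.tan p :=
        Real.tan_lt_tan_of_nonneg_of_lt_pi_div_two hp0pos.le hlt hp.1
      rw [htan] at htlt
      have h2 : 2 < k * Real.tan p := by
        have := (mul_lt_mul_iff_right₀ hkpos).2 htlt
        rwa [mul_div_cancel₀ 2 (ne_of_gt hkpos)] at this
      have hsin : Real.sin p = Real.tan p * Real.cos p := by
        rw [Real.tan_eq_sin_div_cos]; field_simp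
      rw [hsin]
      nlinarith [hcos]
    · have hcos : Real.cos p ≤ 0 :=
        Real.cos_nonpos_of_pi_div_two_le_of_le hge (by linarith [hp.2])
      have hsin : 0 < Real.sin p := hsinpos p ⟨lt_trans hp0pos hp.1, hp.2⟩
      nlinarith
  have hfc : ContinuousOn f (Set.univ) := by
    apply Continuous.continuousOn; rw [hf]; fun_prop
  have hmono : StrictMonoOn f (Set.Icc 0 p₀) := by
    apply strictMonoOn_of_deriv_pos (convex_Icc _ _) (hfc.mono (Set.subset_univ _))
    intro x hx
    rw [interior_Icc] at hx
    rw [(hderiv x).deriv]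
    have h1 : 0 < Real.sin x := hsinpos x ⟨hx.1, lt_trans hx.2 (lt_trans hp0lt (by linarith))⟩
    have h2 := hpos x hx
    positivity
  have hanti : StrictAntiOn f (Set.Icc p₀ π) := by
    apply strictAntiOn_of_deriv_neg (convex_Icc _ _) (hfc.mono (Set.subset_univ _))
    intro x hx
    rw [interior_Icc] at hx
    rw [(hderiv x).deriv]
    have h1 : 0 < Real.sin x := hsinpos x ⟨lt_trans hp0pos hx.1, hx.2⟩
    have h2 := hneg x hx
    have h3 : 0 < (OD ^ 2 / π ^ 2) * Real.exp (-(x * OD / π)) := by positivity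
    nlinarith [mul_pos h3 (mul_pos h1 (neg_pos.2 h2))]
  intro p hp hne
  rcases lt_or_gt_of_ne hne with h | h
  · exact hmono ⟨hp.1.le, h.le⟩ ⟨hp0pos.le, le_rfl⟩ h
  · exact hanti ⟨le_rfl, by linarith [hp0lt]⟩ ⟨h.le, hp.2.le⟩ h
end

section
/- The function η(x) = 4·exp(-(x/π)·arctan(2π/x))/(1 + 4π²/x²) is monotonically increasing for x > 0. -/
open Real

lemma my_arctan_lt_self {t : ℝ} (ht : 0 < t) : arctan t < t := by
  have h0 : 0 < arctan t := by
    have := Real.arctan_strictMono ht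
    rwa [Real.arctan_zero] at this
  calc arctan t < tan (arctan t) := Real.lt_tan h0 (Real.arctan_lt_pi_div_two t)
    _ = t := Real.tan_arctan t

lemma key_deriv {x : ℝ} (hx : 0 < x) :
    HasDerivAt
      (fun x : ℝ => 4 * Real.exp (-(x / π) * Real.arctan (2 * π / x)) / (1 + 4 * π ^ 2 / x ^ 2))
      ((4 * Real.exp (-(x / π) * Real.arctan (2 * π / x)) / (1 + 4 * π ^ 2 / x ^ 2))
        * (2 / x - Real.arctan (2 * π / x) / π)) x := by
  have hx0 : x ≠ 0 := hx.ne'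
  have hπ : (0:ℝ) < π := Real.pi_pos
  have hπ0 : π ≠ 0 := hπ.ne'
  have hq : (1 : ℝ) + (2 * π / x) ^ 2 ≠ 0 := by positivity
  have hden : (1 : ℝ) + 4 * π ^ 2 / x ^ 2 ≠ 0 := by positivity
  have h1 : HasDerivAt (fun y : ℝ => 2 * π / y) (2 * π * (-(x ^ 2)⁻¹)) x := by
    simpa [div_eq_mul_inv] using (hasDerivAt_inv hx0).const_mul (2 * π)
  have h2 := h1.arctan
  have h3 : HasDerivAt (fun y : ℝ => -(y / π)) (-(1 / π)) x := by
    exact ((hasDerivAt_id x).div_const π).neg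
  have h4 := (h3.mul h2).exp
  have h5 := h4.const_mul 4
  have h6 : HasDerivAt (fun y : ℝ => 1 + 4 * π ^ 2 / y ^ 2)
      (4 * π ^ 2 * (-(((x ^ 2) ^ 2)⁻¹ * (2 * x)))) x := by
    have := ((hasDerivAt_pow 2 x).inv (pow_ne_zero 2 hx0)).const_mul (4 * π ^ 2)
    simpa [div_eq_mul_inv, mul_comm] using this.const_add 1
  have h7 := h5.div h6 hden
  convert h7 using 1
  · rfl
  · rfl
  · rfl
  simp only [Pi.mul_apply]
  set a := Real.arctan (2 * π / x) with ha
  set E := Real.exp (-(x / π) * a) with hE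
  field_simp
  ring

theorem optimized_efficiency_strictMono :
    StrictMonoOn
      (fun x : ℝ => 4 * Real.exp (-(x / π) * Real.arctan (2 * π / x)) / (1 + 4 * π ^ 2 / x ^ 2))
      (Set.Ioi 0) := by
  have hπ : (0:ℝ) < π := Real.pi_pos
  apply strictMonoOn_of_deriv_pos (convex_Ioi 0)
  · intro x hx
    exact ((key_deriv hx).differentiableAt).continuousAt.continuousWithinAt
  · intro x hx
    rw [interior_Ioi] at hx
    have hxp : (0:ℝ) < x := hx
    rw [(key_deriv hx).deriv]
    have hfx : 0 < 4 * Real.exp (-(x / π) * Real.arctan (2 * π / x)) / (1 + 4 * π ^ 2 / x ^ 2) := by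
      have hx0 : x ≠ 0 := hx.ne'
      apply div_pos (by positivity)
      exact add_pos_of_pos_of_nonneg one_pos (by positivity)
    have harct : Real.arctan (2 * π / x) < 2 * π / x :=
      my_arctan_lt_self (by positivity)
    have : Real.arctan (2 * π / x) / π < 2 / x := by
      rw [div_lt_iff₀ hπ]
      calc Real.arctan (2 * π / x) < 2 * π / x := harct
        _ = 2 / x * π := by ring
    exact mul_pos hfx (by linarith)
end

section
/- For all x > 0, 4·exp(-(x/π)·arctan(2π/x))/(1 + 4π²/x²) < 4/e². -/
open Real

lemma key_ineq (t : ℝ) (ht : 0 < t) :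
    2 * t - 2 * Real.arctan t < t * Real.log (1 + t ^ 2) := by
  set f : ℝ → ℝ := fun s => s * Real.log (1 + s ^ 2) - 2 * s + 2 * Real.arctan s with hf
  have hderiv : ∀ s : ℝ, HasDerivAt f (Real.log (1 + s ^ 2)) s := by
    intro s
    have hpos : (0:ℝ) < 1 + s ^ 2 := by positivity
    have h1 : HasDerivAt (fun s : ℝ => 1 + s ^ 2) (2 * s) s := by
      simpa using (hasDerivAt_pow 2 s).const_add 1
    have h2 : HasDerivAt (fun s : ℝ => Real.log (1 + s ^ 2)) ((1 + s ^ 2)⁻¹ * (2 * s)) s := by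
      exact ((Real.hasDerivAt_log hpos.ne').comp s h1)
    have h3 : HasDerivAt (fun s : ℝ => s * Real.log (1 + s ^ 2))
        (1 * Real.log (1 + s ^ 2) + s * ((1 + s ^ 2)⁻¹ * (2 * s))) s :=
      (hasDerivAt_id s).mul h2
    have h4 : HasDerivAt Real.arctan (1 / (1 + s ^ 2)) s := Real.hasDerivAt_arctan s
    have h5 := (h3.sub ((hasDerivAt_id s).const_mul 2)).add (h4.const_mul 2)
    convert h5 using 1
    · rfl
    · rfl
    · rfl
    · field_simp
      ring
  have hmono : StrictMonoOn f (Set.Ici (0:ℝ)) := by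
    apply strictMonoOn_of_deriv_pos (convex_Ici 0)
    · exact (((continuous_id.mul ((continuous_const.add (continuous_pow 2)).log
        (fun s => (by positivity : (0:ℝ) < 1 + s ^ 2).ne'))).sub (continuous_const.mul continuous_id)).add
        (continuous_const.mul Real.continuous_arctan)).continuousOn
    · intro s hs
      rw [interior_Ici] at hs
      rw [(hderiv s).deriv]
      have : (1:ℝ) < 1 + s ^ 2 := by nlinarith [hs.out]
      exact Real.log_pos this
  have h0 : f 0 = 0 := by simp [hf]
  have := hmono (Set.self_mem_Ici) (Set.mem_Ici.mpr ht.le) ht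
  rw [h0] at this
  simp only [hf] at this
  linarith

theorem optimized_efficiency_lt_sup (x : ℝ) (hx : 0 < x) :
    4 * Real.exp (-(x / π) * Real.arctan (2 * π / x)) / (1 + 4 * π ^ 2 / x ^ 2)
      < 4 / Real.exp 2 := by
  have hpi := Real.pi_pos
  set t : ℝ := 2 * π / x with hts
  have ht : 0 < t := by positivity
  have hB : 4 * π ^ 2 / x ^ 2 = t ^ 2 := by
    field_simp [hts]
    rw [hts]; field_simp; ring
  have hxp : x / π = 2 / t := by
    rw [hts]; field_simp
  have h1t : (0:ℝ) < 1 + t ^ 2 := by positivity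
  have hkey := key_ineq t ht
  have hA : -(x / π) * Real.arctan t + 2 < Real.log (1 + t ^ 2) := by
    rw [hxp]
    have heq : -(2 / t) * Real.arctan t + 2 = (2 * t - 2 * Real.arctan t) / t := by
      field_simp; ring
    rw [heq, div_lt_iff₀ ht]
    nlinarith [hkey]
  have hexp : Real.exp (-(x / π) * Real.arctan t) * Real.exp 2 < 1 + t ^ 2 := by
    rw [← Real.exp_add, ← Real.exp_log h1t]
    exact Real.exp_lt_exp.mpr hA
  rw [hB, div_lt_div_iff₀ (by positivity) (Real.exp_pos 2)]
  nlinarith [hexp]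
end

section
/- Let g: [a,b] → ℝ be monotonically decreasing, f_s(x) = α·𝟙_{[a,c]}(x) for c ∈ [a,b], and f: [a,b] → ℝ integrable with 0 ≤ f ≤ α and ∫_a^b f = ∫_a^b f_s = α(c-a). Then ∫_a^b (f(x) - f_s(x))·g(x) dx ≤ 0. -/
open Real MeasureTheory intervalIntegral

theorem core_rearrangement_inequality
    (a b α c : ℝ) (hab : a < b) (hα : 0 < α) (hc : c ∈ Set.Icc a b)
    (g : ℝ → ℝ) (hg : AntitoneOn g (Set.Icc a b))
    (f : ℝ → ℝ)
    (hfint : IntervalIntegrable f volume a b)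
    (hfgint : IntervalIntegrable (fun x => f x * g x) volume a b)
    (hbound : ∀ x ∈ Set.Icc a b, 0 ≤ f x ∧ f x ≤ α)
    (harea : ∫ x in a..b, f x = α * (c - a)) :
    (∫ x in a..b, (f x - Set.indicator (Set.Icc a c) (fun _ => α) x) * g x) ≤ 0 := by
  obtain ⟨hac, hcb⟩ := hc
  have hcmem : c ∈ Set.Icc a b := ⟨hac, hcb⟩
  have hgu : AntitoneOn g (Set.uIcc a b) := by rwa [Set.uIcc_of_le hab.le]
  have hgint : IntervalIntegrable g volume a b := hgu.intervalIntegrable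
  have sub1 : Set.uIcc a c ⊆ Set.uIcc a b :=
    Set.uIcc_subset_uIcc (by simp) (by rw [Set.uIcc_of_le hab.le]; exact hcmem)
  have sub2 : Set.uIcc c b ⊆ Set.uIcc a b :=
    Set.uIcc_subset_uIcc (by rw [Set.uIcc_of_le hab.le]; exact hcmem) (by simp)
  have hf1 := hfint.mono_set sub1
  have hf2 := hfint.mono_set sub2
  have hfg1 := hfgint.mono_set sub1
  have hfg2 := hfgint.mono_set sub2
  have hg1 := hgint.mono_set sub1
  set ind := Set.indicator (Set.Icc a c) (fun _ : ℝ => α) with hind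
  -- integrability of ind * g on [a,c] and [c,b]
  have hig1 : IntervalIntegrable (fun x => ind x * g x) volume a c := by
    rw [intervalIntegrable_iff_integrableOn_Icc_of_le hac]
    have h := (intervalIntegrable_iff_integrableOn_Icc_of_le hac).mp (hg1.const_mul α)
    exact h.congr_fun (fun x hx => by
      simp [hind, Set.indicator_of_mem hx]) measurableSet_Icc
  have hig2 : IntervalIntegrable (fun x => ind x * g x) volume c b := by
    rw [intervalIntegrable_iff, Set.uIoc_of_le hcb]
    exact (integrableOn_zero).congr_fun (fun x hx => by
      simp [hind, Set.indicator_of_notMem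
        (fun h : x ∈ Set.Icc a c => absurd h.2 (not_le.2 hx.1))]) measurableSet_Ioc
  -- value of pieces of indicator integral
  have eig2 : ∫ x in c..b, ind x * g x = 0 := by
    rw [show (0:ℝ) = ∫ _ in c..b, (0:ℝ) by simp]
    apply intervalIntegral.integral_congr_ae
    filter_upwards with x hx
    rw [Set.uIoc_of_le hcb] at hx
    rw [hind, Set.indicator_of_notMem
      (fun h : x ∈ Set.Icc a c => absurd h.2 (not_le.2 hx.1)), zero_mul]
  have eig1 : ∫ x in a..c, ind x * g x = ∫ x in a..c, α * g x := by
    apply intervalIntegral.integral_congr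
    intro x hx
    rw [Set.uIcc_of_le hac] at hx
    simp [hind, Set.indicator_of_mem hx]
  -- split the main integral
  have hsplit : (∫ x in a..b, (f x - ind x) * g x)
      = (∫ x in a..c, (f x - α) * g x) + ∫ x in c..b, f x * g x := by
    have h1 : (∫ x in a..b, (f x - ind x) * g x)
        = (∫ x in a..b, f x * g x) - ∫ x in a..b, ind x * g x := by
      rw [← intervalIntegral.integral_sub hfgint (hig1.trans hig2)]
      congr 1; ext x; ring
    have h2 : (∫ x in a..b, f x * g x)
        = (∫ x in a..c, f x * g x) + ∫ x in c..b, f x * g x :=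
      (intervalIntegral.integral_add_adjacent_intervals hfg1 hfg2).symm
    have h3 : (∫ x in a..b, ind x * g x)
        = (∫ x in a..c, ind x * g x) + ∫ x in c..b, ind x * g x :=
      (intervalIntegral.integral_add_adjacent_intervals hig1 hig2).symm
    have h4 : (∫ x in a..c, (f x - α) * g x)
        = (∫ x in a..c, f x * g x) - ∫ x in a..c, α * g x := by
      rw [← intervalIntegral.integral_sub hfg1 (hg1.const_mul α)]
      congr 1; ext x; ring
    rw [h1, h2, h3, eig2, eig1, h4]; ring
  -- integrability of comparison functions
  have int1 : IntervalIntegrable (fun x => (f x - α) * g x) volume a c := by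
    have h := hfg1.sub (hg1.const_mul α)
    simpa [sub_mul] using h
  have int1' : IntervalIntegrable (fun x => (f x - α) * g c) volume a c :=
    (hf1.sub intervalIntegrable_const).mul_const _
  -- pointwise bounds
  have bA : (∫ x in a..c, (f x - α) * g x) ≤ ∫ x in a..c, (f x - α) * g c := by
    apply intervalIntegral.integral_mono_on hac int1 int1'
    intro x hx
    have hxm : x ∈ Set.Icc a b := ⟨hx.1, hx.2.trans hcb⟩
    exact mul_le_mul_of_nonpos_left (hg hxm hcmem hx.2)
      (sub_nonpos.mpr (hbound x hxm).2)
  have bB : (∫ x in c..b, f x * g x) ≤ ∫ x in c..b, f x * g c := by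
    apply intervalIntegral.integral_mono_on hcb hfg2 (hf2.mul_const _)
    intro x hx
    have hxm : x ∈ Set.Icc a b := ⟨hac.trans hx.1, hx.2⟩
    exact mul_le_mul_of_nonneg_left (hg hcmem hxm hx.1) (hbound x hxm).1
  -- evaluate comparison integrals
  have vA : (∫ x in a..c, (f x - α) * g c)
      = ((∫ x in a..c, f x) - α * (c - a)) * g c := by
    rw [intervalIntegral.integral_mul_const,
      intervalIntegral.integral_sub hf1 intervalIntegrable_const,
      intervalIntegral.integral_const, smul_eq_mul]
    ring
  have vB : (∫ x in c..b, f x * g c) = (∫ x in c..b, f x) * g c :=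
    intervalIntegral.integral_mul_const _ _
  have key : (∫ x in a..c, f x) + (∫ x in c..b, f x) = α * (c - a) := by
    rw [intervalIntegral.integral_add_adjacent_intervals hf1 hf2, harea]
  have hz : ((∫ x in a..c, f x) - α * (c - a)) * g c
      + (∫ x in c..b, f x) * g c = 0 := by
    rw [← add_mul, show (∫ x in a..c, f x) - α * (c - a) + (∫ x in c..b, f x) = 0
      by linarith, zero_mul]
  rw [hsplit]
  linarith [bA, bB, vA, vB, hz]
end

section
/- For the square tooth of half-width Γ ∈ [0, π/T] and height α_M centered at 0 inside one period [-π/T, π/T], the Fourier coefficients are F₀ = α_M·Γ·T/π and F_{-1} = (α_M/π)·sin(ΓT), and the resulting forward retrieval efficiency is η(L) = (α_M·L·sin(ΓT)/π)²·exp(-α_M·L·Γ·T/π). -/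
open Real MeasureTheory intervalIntegral Complex

theorem square_tooth_fourier_and_efficiency
    (T αM Γ L : ℝ) (hT : 0 < T) (hα : 0 < αM) (hL : 0 < L)
    (hΓ0 : 0 ≤ Γ) (hΓ : Γ ≤ π / T)
    (f : ℝ → ℝ) (hf : f = Set.indicator (Set.Icc (-Γ) Γ) (fun _ => αM)) :
    ((T / (2 * π)) * ∫ ω in (-(π / T))..(π / T), f ω) = αM * Γ * T / π ∧
    ((T / (2 * π) : ℂ) * ∫ ω in (-(π / T))..(π / T),
        (f ω : ℂ) * Complex.exp (Complex.I * ω * T)) = ((αM / π) * Real.sin (Γ * T) : ℝ) ∧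
    ‖((T / (2 * π) : ℂ) * ∫ ω in (-(π / T))..(π / T),
        (f ω : ℂ) * Complex.exp (Complex.I * ω * T)) * (L : ℂ)‖ ^ 2 *
      Real.exp (-((T / (2 * π)) * ∫ ω in (-(π / T))..(π / T), f ω) * L)
      = (αM * L * Real.sin (Γ * T) / π) ^ 2 * Real.exp (-(αM * L * Γ * T / π)) := by
  have hπ : (0:ℝ) < π := Real.pi_pos
  have ha : 0 < π / T := div_pos hπ hT
  have hle : -(π / T) ≤ π / T := by linarith
  have hΓle : -Γ ≤ Γ := by linarith
  have hS : (Set.Ioc (-(π/T)) (π/T) ∩ Set.Icc (-Γ) Γ : Set ℝ) =ᵐ[volume] (Set.Ioc (-Γ) Γ : Set ℝ) := by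
    rw [MeasureTheory.ae_eq_set]
    constructor
    · refine measure_mono_null (fun x hx => ?_) (measure_singleton (-Γ))
      simp only [Set.mem_diff, Set.mem_inter_iff, Set.mem_Icc, Set.mem_Ioc,
        Set.mem_singleton_iff, not_and, not_lt] at hx ⊢
      rcases hx with ⟨⟨_, h1, h2⟩, h3⟩
      by_contra hne
      have := h3 (lt_of_le_of_ne h1 (Ne.symm hne))
      linarith
    · have : Set.Ioc (-Γ) Γ \ (Set.Ioc (-(π/T)) (π/T) ∩ Set.Icc (-Γ) Γ) = ∅ := by
        apply Set.diff_eq_empty.mpr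
        intro x hx
        simp only [Set.mem_Ioc] at hx
        exact ⟨⟨by linarith, by linarith⟩, le_of_lt hx.1, hx.2⟩
      rw [this]; exact measure_empty
  have h1 : ((T / (2 * π)) * ∫ ω in (-(π / T))..(π / T), f ω) = αM * Γ * T / π := by
    rw [hf, intervalIntegral.integral_of_le hle,
      MeasureTheory.setIntegral_indicator measurableSet_Icc,
      MeasureTheory.setIntegral_congr_set hS, MeasureTheory.setIntegral_const]
    rw [Real.volume_real_Ioc_of_le hΓle, smul_eq_mul]
    field_simp
    ring
  have hrw : ∀ ω : ℝ, (f ω : ℂ) * Complex.exp (Complex.I * ω * T)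
      = Set.indicator (Set.Icc (-Γ) Γ)
          (fun ω : ℝ => (αM : ℂ) * Complex.exp (Complex.I * ω * T)) ω := by
    intro ω
    by_cases h : ω ∈ Set.Icc (-Γ) Γ <;> simp [hf, h]
  have hexp : (∫ ω in (-Γ)..Γ, Complex.exp (Complex.I * ω * T))
      = (2 * Complex.I * Real.sin (Γ * T)) / (Complex.I * T) := by
    have hc : (Complex.I * T : ℂ) ≠ 0 :=
      mul_ne_zero Complex.I_ne_zero (by exact_mod_cast hT.ne')
    have : ∀ ω : ℝ, Complex.I * ω * T = (Complex.I * T) * ω := fun ω => by ring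
    simp_rw [this]
    rw [integral_exp_mul_complex hc]
    congr 1
    rw [show (Complex.I * T * Γ : ℂ) = ((T * Γ : ℝ) : ℂ) * Complex.I by push_cast; ring,
      show (Complex.I * T * ((-Γ : ℝ) : ℂ) : ℂ) = ((-(T * Γ) : ℝ) : ℂ) * Complex.I by
        push_cast; ring,
      Complex.exp_mul_I, Complex.exp_mul_I]
    push_cast
    rw [Complex.cos_neg, Complex.sin_neg, mul_comm (T:ℂ) (Γ:ℂ)]
    ring
  have h2 : ((T / (2 * π) : ℂ) * ∫ ω in (-(π / T))..(π / T),
      (f ω : ℂ) * Complex.exp (Complex.I * ω * T)) = ((αM / π) * Real.sin (Γ * T) : ℝ) := by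
    simp_rw [hrw]
    rw [intervalIntegral.integral_of_le hle,
      MeasureTheory.setIntegral_indicator measurableSet_Icc,
      MeasureTheory.setIntegral_congr_set hS,
      ← intervalIntegral.integral_of_le hΓle,
      intervalIntegral.integral_const_mul, hexp]
    have hTc : (T : ℂ) ≠ 0 := by exact_mod_cast hT.ne'
    have hπc : (π : ℂ) ≠ 0 := by exact_mod_cast hπ.ne'
    field_simp
    push_cast
    ring_nf
    field_simp
  refine ⟨h1, h2, ?_⟩
  rw [h1, h2, ← Complex.ofReal_mul, Complex.norm_real, Real.norm_eq_abs, _root_.sq_abs,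
    show -(αM * Γ * T / π) * L = -(αM * L * Γ * T / π) by ring]
  ring
end
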